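/- Fix reals β > 0, γ > 0 with βγ < 1 and a positive integer d ≥ 2. Let P_d(z) = ∑_{k=0}^d C(d,k) β^{C(k,2)} γ^{C(d−k,2)} z^k and suppose its roots are r1 > r2 > ... > rd (all real and negative). Then consecutive roots satisfy r_i / r_{i+1} < βγ for all 1 ≤ i ≤ d−1. -/

import Mathlib

open Polynomial Finset Filter

noncomputable def pp (β γ : ℝ) (n : ℕ) : Polynomial ℝ :=
  ∑ k ∈ range (n+1), C ((n.choose k : ℝ) * β ^ (k.choose 2) * γ ^ ((n-k).choose 2)) * X ^ k

lemma pp_eval (β γ : ℝ) (n : ℕ) (z : ℝ) :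
    eval z (pp β γ n) = ∑ k ∈ range (n+1),
      (n.choose k : ℝ) * β ^ (k.choose 2) * γ ^ ((n-k).choose 2) * z ^ k := by
  simp [pp, eval_finset_sum]

lemma pp_coeff (β γ : ℝ) (n m : ℕ) (hm : m ≤ n) :
    (pp β γ n).coeff m = (n.choose m : ℝ) * β ^ (m.choose 2) * γ ^ ((n-m).choose 2) := by
  rw [pp, finset_sum_coeff]
  rw [Finset.sum_eq_single m]
  · rw [coeff_C_mul, coeff_X_pow]; simp
  · intro k _ hk
    rw [coeff_C_mul, coeff_X_pow, if_neg (Ne.symm hk), mul_zero]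
  · intro hmem
    exact absurd (mem_range.2 (Nat.lt_succ_of_le hm)) hmem

lemma pp_natDegree (β γ : ℝ) (hβ : 0 < β) (n : ℕ) : (pp β γ n).natDegree = n := by
  apply le_antisymm
  · apply Polynomial.natDegree_sum_le_of_forall_le
    intro k hk
    refine (natDegree_C_mul_le _ _).trans ?_
    simpa using Nat.lt_succ_iff.1 (mem_range.1 hk)
  · apply Polynomial.le_natDegree_of_ne_zero
    rw [pp_coeff β γ n n le_rfl]
    have : (0:ℝ) < (n.choose n : ℝ) * β ^ (n.choose 2) * γ ^ ((n-n).choose 2) := by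
      simp [Nat.choose_self]
      positivity
    exact ne_of_gt this

lemma pp_leadingCoeff (β γ : ℝ) (hβ : 0 < β) (n : ℕ) :
    (pp β γ n).leadingCoeff = β ^ (n.choose 2) := by
  rw [leadingCoeff, pp_natDegree β γ hβ n, pp_coeff β γ n n le_rfl]
  simp

lemma pp_ne_zero (β γ : ℝ) (hβ : 0 < β) (n : ℕ) : pp β γ n ≠ 0 := by
  intro hh
  have := pp_leadingCoeff β γ hβ n
  rw [hh] at this
  simp only [leadingCoeff_zero] at this
  have : (0:ℝ) < β ^ (n.choose 2) := by positivity
  simp_all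

lemma choose_two_succ (m : ℕ) : (m+1).choose 2 = m.choose 2 + m := by
  rw [Nat.choose_succ_succ]
  simp [Nat.choose_one_right]
  omega

lemma pp_rec (β γ : ℝ) (hγ : 0 < γ) (n : ℕ) (z : ℝ) :
    eval z (pp β γ (n+1)) = γ^n * eval (z/γ) (pp β γ n) + z * eval (β*z) (pp β γ n) := by
  have hT1 : γ^n * eval (z/γ) (pp β γ n)
      = ∑ k ∈ range (n+1), (n.choose k : ℝ) * β ^ (k.choose 2) * γ ^ ((n+1-k).choose 2) * z ^ k := by
    rw [pp_eval, Finset.mul_sum]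
    refine Finset.sum_congr rfl ?_
    intro k hk
    have hkn : k ≤ n := Nat.lt_succ_iff.1 (mem_range.1 hk)
    have h1 : n + 1 - k = (n - k) + 1 := by omega
    have hγn : γ^n = γ^(n-k) * γ^k := by rw [← pow_add]; congr 1; omega
    rw [h1, choose_two_succ, pow_add, div_pow, hγn]
    have hgk : (γ:ℝ)^k ≠ 0 := pow_ne_zero _ (ne_of_gt hγ)
    field_simp
  have hT2 : z * eval (β*z) (pp β γ n)
      = ∑ k ∈ range (n+1), (n.choose k : ℝ) * β ^ ((k+1).choose 2) * γ ^ ((n-k).choose 2) * z ^ (k+1) := by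
    rw [pp_eval, Finset.mul_sum]
    refine Finset.sum_congr rfl ?_
    intro k hk
    rw [choose_two_succ, pow_add, mul_pow, pow_succ]
    ring
  rw [hT1, hT2, pp_eval]
  rw [Finset.sum_range_succ' (fun k => (((n+1)).choose k : ℝ) * β ^ (k.choose 2) * γ ^ ((n+1-k).choose 2) * z ^ k)]
  have hmain : ∑ k ∈ range (n+1), ((n+1).choose (k+1) : ℝ) * β ^ ((k+1).choose 2) * γ ^ ((n+1-(k+1)).choose 2) * z ^ (k+1)
      = (∑ k ∈ range (n+1), (n.choose (k+1) : ℝ) * β ^ ((k+1).choose 2) * γ ^ ((n-k).choose 2) * z ^ (k+1))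
      + ∑ k ∈ range (n+1), (n.choose k : ℝ) * β ^ ((k+1).choose 2) * γ ^ ((n-k).choose 2) * z ^ (k+1) := by
    rw [← Finset.sum_add_distrib]
    refine Finset.sum_congr rfl ?_
    intro k hk
    have he : n + 1 - (k+1) = n - k := by omega
    rw [he, Nat.choose_succ_succ]
    push_cast
    ring
  have hS1 : (∑ k ∈ range (n+1), (n.choose (k+1) : ℝ) * β ^ ((k+1).choose 2) * γ ^ ((n-k).choose 2) * z ^ (k+1))
      = ∑ k ∈ range n, (n.choose (k+1) : ℝ) * β ^ ((k+1).choose 2) * γ ^ ((n-k).choose 2) * z ^ (k+1) := by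
    rw [Finset.sum_range_succ]
    simp [Nat.choose_succ_self]
  have hT1' : (∑ k ∈ range (n+1), (n.choose k : ℝ) * β ^ (k.choose 2) * γ ^ ((n+1-k).choose 2) * z ^ k)
      = (∑ k ∈ range n, (n.choose (k+1) : ℝ) * β ^ ((k+1).choose 2) * γ ^ ((n+1-(k+1)).choose 2) * z ^ (k+1))
      + (n.choose 0 : ℝ) * β ^ (Nat.choose 0 2) * γ ^ ((n+1-0).choose 2) * z ^ 0 := by
    exact Finset.sum_range_succ' (fun k => (n.choose k : ℝ) * β ^ (k.choose 2) * γ ^ ((n+1-k).choose 2) * z ^ k) n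
  have hsame : (∑ k ∈ range n, (n.choose (k+1) : ℝ) * β ^ ((k+1).choose 2) * γ ^ ((n+1-(k+1)).choose 2) * z ^ (k+1))
      = ∑ k ∈ range n, (n.choose (k+1) : ℝ) * β ^ ((k+1).choose 2) * γ ^ ((n-k).choose 2) * z ^ (k+1) := by
    refine Finset.sum_congr rfl ?_
    intro k hk
    have he : n + 1 - (k+1) = n - k := by omega
    rw [he]
  have hzero : ((n+1).choose 0 : ℝ) * β ^ (Nat.choose 0 2) * γ ^ ((n+1-0).choose 2) * z ^ 0
      = (n.choose 0 : ℝ) * β ^ (Nat.choose 0 2) * γ ^ ((n+1-0).choose 2) * z ^ 0 := by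
    simp
  rw [hmain, hS1, hT1', hsame, hzero]
  ring

lemma prod_sign (y : ℕ → ℝ) (n k : ℕ) (hk : k ≤ n) (c : ℝ)
    (hneg : ∀ i, i < k → y i < c) (hpos : ∀ i, k ≤ i → i < n → c < y i) :
    0 < (-1:ℝ)^k * ∏ j ∈ range n, (y j - c) := by
  rw [← Finset.prod_range_mul_prod_Ico _ hk]
  have h1 : ∏ j ∈ range k, (y j - c) = (-1:ℝ)^k * ∏ j ∈ range k, (c - y j) := by
    calc ∏ j ∈ range k, (y j - c) = ∏ j ∈ range k, ((-1) * (c - y j)) := by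
          refine Finset.prod_congr rfl ?_; intro j _; ring
      _ = (-1:ℝ)^k * ∏ j ∈ range k, (c - y j) := by
          rw [Finset.prod_mul_distrib, Finset.prod_const, Finset.card_range]
  rw [h1, ← mul_assoc, ← mul_assoc, ← mul_pow]
  have h2 : 0 < ∏ j ∈ range k, (c - y j) :=
    Finset.prod_pos (fun j hj => sub_pos.2 (hneg j (mem_range.1 hj)))
  have h3 : 0 < ∏ j ∈ Ico k n, (y j - c) :=
    Finset.prod_pos (fun j hj => sub_pos.2 (hpos j (mem_Ico.1 hj).1 (mem_Ico.1 hj).2))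
  simpa using mul_pos h2 h3
lemma pp_roots (β γ : ℝ) (hβ : 0 < β) (hγ : 0 < γ) (h : β*γ < 1) :
    ∀ n : ℕ, ∃ x : ℕ → ℝ,
      (∀ i, i+1 < n → x i < β*γ*x (i+1)) ∧
      (∀ i, i < n → 0 < x i) ∧
      (∀ i j, i < j → j < n → x i < x j) ∧
      pp β γ n = C (β^(n.choose 2)) * ∏ j ∈ range n, (X + C (x j)) := by
  intro n
  induction n with
  | zero =>
    refine ⟨fun _ => 0, by omega, by omega, by omega, ?_⟩
    simp [pp]
  | succ n ih =>
    obtain ⟨y, hspread, hposy, hmono, hfact⟩ := ih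
    have hβγ : 0 < β * γ := mul_pos hβ hγ
    set B : ℝ := β ^ (n.choose 2) with hBdef
    have hB : 0 < B := by positivity
    have evaln : ∀ z : ℝ, eval z (pp β γ n) = B * ∏ j ∈ range n, (z + y j) := by
      intro z; rw [hfact]; simp [eval_prod]
    set p : Polynomial ℝ := pp β γ (n+1) with hpdef
    set F : ℝ → ℝ := fun t => eval (-t) p with hFdef
    have hFc : Continuous F := (Polynomial.continuous p).comp continuous_neg
    have key1 : ∀ j, j < n → F (γ * y j)
        = (-(γ * y j)) * (B * ∏ i ∈ range n, (y i - β*γ*y j)) := by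
      intro j hj
      have hyj : 0 < y j := hposy j hj
      show eval (-(γ * y j)) p = _
      rw [hpdef, pp_rec β γ hγ n, evaln, evaln]
      have e1 : -(γ * y j) / γ = -(y j) := by
        field_simp
      have e2 : β * -(γ * y j) = -(β * γ * y j) := by ring
      rw [e1, e2]
      have hz : ∏ j_1 ∈ range n, (-(y j) + y j_1) = 0 := by
        apply Finset.prod_eq_zero (mem_range.2 hj)
        ring
      rw [hz]
      have : ∏ i ∈ range n, (-(β * γ * y j) + y i) = ∏ i ∈ range n, (y i - β*γ*y j) := by
        refine Finset.prod_congr rfl ?_; intro i _; ring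
      rw [this]
      ring
    have key2 : ∀ j, j < n → F (y j / β)
        = γ^n * (B * ∏ i ∈ range n, (y i - y j/(β*γ))) := by
      intro j hj
      have hyj : 0 < y j := hposy j hj
      show eval (-(y j / β)) p = _
      rw [hpdef, pp_rec β γ hγ n, evaln, evaln]
      have e2 : β * -(y j / β) = -(y j) := by
        field_simp
      rw [e2]
      have hz : ∏ j_1 ∈ range n, (-(y j) + y j_1) = 0 := by
        apply Finset.prod_eq_zero (mem_range.2 hj)
        ring
      rw [hz]
      have e1 : -(y j / β) / γ = -(y j/(β*γ)) := by
        field_simp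
      rw [e1]
      have : ∏ i ∈ range n, (-(y j/(β*γ)) + y i) = ∏ i ∈ range n, (y i - y j/(β*γ)) := by
        refine Finset.prod_congr rfl ?_; intro i _; ring
      rw [this]
      ring
    have sgn1 : ∀ j, j < n → 0 < (-1:ℝ)^(j+1) * F (γ * y j) := by
      intro j hj
      have hyj : 0 < y j := hposy j hj
      have hps := prod_sign y n j (le_of_lt hj) (β*γ*y j)
        (fun i hi => by
          have h1 : y i < β*γ*y (i+1) := hspread i (by omega)
          by_cases hij : i + 1 = j
          · rwa [hij] at h1
          · have hl : i + 1 < j := by omega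
            exact h1.trans (by
              have := hmono (i+1) j hl hj
              nlinarith))
        (fun i hik hin => by
          have hyi : 0 < y i := hposy i hin
          rcases eq_or_lt_of_le hik with he | hl
          · rw [← he]; nlinarith
          · have := hmono j i hl hin
            nlinarith)
      rw [key1 j hj]
      have hexp : (-1:ℝ)^(j+1) * ((-(γ * y j)) * (B * ∏ i ∈ range n, (y i - β*γ*y j)))
          = (γ * y j) * B * ((-1:ℝ)^j * ∏ i ∈ range n, (y i - β*γ*y j)) := by
        rw [pow_succ]; ring
      rw [hexp]
      have : 0 < γ * y j := by positivity
      positivity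
    have sgn2 : ∀ j, j < n → 0 < (-1:ℝ)^(j+1) * F (y j / β) := by
      intro j hj
      have hyj : 0 < y j := hposy j hj
      have hc : y j < y j / (β*γ) := by
        rw [lt_div_iff₀ hβγ]; nlinarith
      have hps := prod_sign y n (j+1) hj (y j/(β*γ))
        (fun i hi => by
          rcases eq_or_lt_of_le (Nat.lt_succ_iff.1 hi) with he | hl
          · rwa [he]
          · exact (hmono i j hl hj).trans hc)
        (fun i hik hin => by
          have h1 : y j < β*γ*y (j+1) := hspread j (by omega)
          have h2 : β*γ*y (j+1) ≤ β*γ*y i := by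
            rcases eq_or_lt_of_le hik with he | hl
            · rw [he]
            · have := hmono (j+1) i hl hin
              nlinarith
          rw [div_lt_iff₀ hβγ]
          nlinarith)
      rw [key2 j hj]
      have hexp : (-1:ℝ)^(j+1) * (γ^n * (B * ∏ i ∈ range n, (y i - y j/(β*γ))))
          = γ^n * B * ((-1:ℝ)^(j+1) * ∏ i ∈ range n, (y i - y j/(β*γ))) := by
        ring
      rw [hexp]
      positivity
    have sgn0 : 0 < F 0 := by
      show 0 < eval (-0) p
      rw [neg_zero, hpdef, pp_eval]
      rw [Finset.sum_eq_single 0]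
      · simp
        positivity
      · intro k _ hk
        simp [zero_pow hk]
      · intro hmem
        exact absurd (mem_range.2 (by omega)) hmem
    -- big T
    have hnd : p.natDegree = n + 1 := pp_natDegree β γ hβ (n+1)
    have hp0 : p ≠ 0 := pp_ne_zero β γ hβ (n+1)
    obtain ⟨T, hT0, hTgt, hTsgn⟩ : ∃ T : ℝ, 0 < T ∧ (∀ j ∈ range n, y j / β < T) ∧
        0 < (-1:ℝ)^(n+1) * F T := by
      set q : Polynomial ℝ := C ((-1:ℝ)^(n+1)) * p.comp (-X) with hqdef
      have hne : ((-1:ℝ)^(n+1)) ≠ 0 := pow_ne_zero _ (by norm_num)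
      have hqe : ∀ t : ℝ, eval t q = (-1:ℝ)^(n+1) * F t := by
        intro t
        simp [hqdef, eval_comp, hFdef]
      have hXd : (-X : Polynomial ℝ).natDegree = 1 := by
        rw [natDegree_neg, natDegree_X]
      have hqd : q.natDegree = n + 1 := by
        rw [hqdef, natDegree_C_mul hne, natDegree_comp, hXd, hnd, mul_one]
      have hsq : ((-1:ℝ)^(n+1)) * ((-1:ℝ)^(n+1)) = 1 := by
        rw [← mul_pow]; norm_num
      have hql : q.leadingCoeff = β ^ ((n+1).choose 2) := by
        rw [hqdef, leadingCoeff_mul, leadingCoeff_C, leadingCoeff_comp (by rw [hXd]; norm_num),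
          hnd, hpdef, pp_leadingCoeff β γ hβ]
        have : (-X : Polynomial ℝ).leadingCoeff = -1 := by
          rw [leadingCoeff_neg, leadingCoeff_X]
        rw [this]
        calc (-1:ℝ)^(n+1) * (β ^ ((n+1).choose 2) * (-1)^(n+1))
            = β ^ ((n+1).choose 2) * ((-1:ℝ)^(n+1) * (-1)^(n+1)) := by ring
          _ = β ^ ((n+1).choose 2) := by rw [hsq, mul_one]
      have hdeg : 0 < q.degree := natDegree_pos_iff_degree_pos.1 (by omega)
      have htend : Tendsto (fun t => eval t q) atTop atTop :=
        q.tendsto_atTop_of_leadingCoeff_nonneg hdeg (by rw [hql]; positivity)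
      have hev1 : ∀ᶠ t in atTop, 0 < eval t q := htend.eventually_gt_atTop 0
      have hev2 : ∀ᶠ t in atTop, ∀ j ∈ range n, y j / β < t :=
        (eventually_all_finset (range n)).2 (fun j _ => eventually_gt_atTop _)
      have hev3 : ∀ᶠ t in atTop, (0:ℝ) < t := eventually_gt_atTop 0
      obtain ⟨T, h1, h2, h3⟩ := (hev1.and (hev2.and hev3)).exists
      exact ⟨T, h3, h2, by rw [← hqe]; exact h1⟩
    -- brackets
    set L : ℕ → ℝ := fun j => if j = 0 then 0 else y (j-1) / β with hLdef
    set U : ℕ → ℝ := fun j => if j < n then γ * y j else T with hUdef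
    have hL_nonneg : ∀ j, j ≤ n → 0 ≤ L j := by
      intro j hj
      by_cases h0 : j = 0
      · simp [hLdef, h0]
      · have : 0 < y (j-1) := hposy _ (by omega)
        simp only [hLdef, if_neg h0]
        positivity
    have hLU : ∀ j, j ≤ n → L j < U j := by
      intro j hj
      by_cases h0 : j = 0
      · subst h0
        by_cases hn : 0 < n
        · simp only [hLdef, hUdef, if_pos rfl, if_pos hn]
          exact mul_pos hγ (hposy 0 hn)
        · have hn0 : ¬ (0 < n) := hn
          simp only [hLdef, hUdef, if_pos rfl, if_neg hn0]
          exact hT0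
      · by_cases hjn : j < n
        · simp only [hLdef, hUdef, if_neg h0, if_pos hjn]
          have hs := hspread (j-1) (by omega)
          have hj1 : j - 1 + 1 = j := by omega
          rw [hj1] at hs
          have hyj : 0 < y j := hposy j hjn
          rw [div_lt_iff₀ hβ]
          nlinarith
        · have hjn' : j = n := by omega
          rw [hjn']
          simp only [hLdef, hUdef, if_neg (show ¬ (n = 0) by omega), if_neg (lt_irrefl n)]
          exact hTgt (n-1) (mem_range.2 (by omega))
    have hFL : ∀ j, j ≤ n → 0 < (-1:ℝ)^j * F (L j) := by
      intro j hj
      by_cases h0 : j = 0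
      · subst h0
        simpa [hLdef] using sgn0
      · have hs := sgn2 (j-1) (by omega)
        have hj1 : j - 1 + 1 = j := by omega
        rw [hj1] at hs
        simpa [hLdef, if_neg h0] using hs
    have hFU : ∀ j, j ≤ n → 0 < (-1:ℝ)^(j+1) * F (U j) := by
      intro j hj
      by_cases hjn : j < n
      · simpa [hUdef, if_pos hjn] using sgn1 j hjn
      · have hjn' : j = n := by omega
        rw [hjn']
        simpa [hUdef, if_neg (lt_irrefl n)] using hTsgn
    have hUL : ∀ i j, i < j → j ≤ n → U i < L j := by
      intro i j hij hj
      have hin : i < n := by omega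
      have hj0 : ¬ (j = 0) := by omega
      simp only [hLdef, hUdef, if_pos hin, if_neg hj0]
      have hyi : 0 < y i := hposy i hin
      have hle : y i ≤ y (j-1) := by
        by_cases he : i = j - 1
        · rw [he]
        · exact le_of_lt (hmono i (j-1) (by omega) (by omega))
      have h1 : γ * y i < y i / β := by
        rw [lt_div_iff₀ hβ]
        nlinarith
      have h2 : y i / β ≤ y (j-1) / β := by gcongr
      linarith
    have hroot : ∀ j, j ≤ n → ∃ t, L j < t ∧ t < U j ∧ F t = 0 := by
      intro j hj
      set G : ℝ → ℝ := fun t => (-1:ℝ)^(j+1) * F t with hGdef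
      have hGc : ContinuousOn G (Set.Icc (L j) (U j)) :=
        (continuous_const.mul hFc).continuousOn
      have hGL : G (L j) < 0 := by
        have := hFL j hj
        have he : G (L j) = -((-1:ℝ)^j * F (L j)) := by
          simp only [hGdef, pow_succ]
          ring
        rw [he]
        linarith
      have hGU : 0 < G (U j) := hFU j hj
      have hsub := intermediate_value_Ioo (le_of_lt (hLU j hj)) hGc
      have hmem : (0:ℝ) ∈ Set.Ioo (G (L j)) (G (U j)) := ⟨hGL, hGU⟩
      obtain ⟨t, htIoo, htG⟩ := hsub hmem
      refine ⟨t, htIoo.1, htIoo.2, ?_⟩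
      have hne : ((-1:ℝ)^(j+1)) ≠ 0 := pow_ne_zero _ (by norm_num)
      rcases mul_eq_zero.1 htG with hc | hc
      · exact absurd hc hne
      · exact hc
    have hch : ∀ j : ℕ, ∃ t : ℝ, j ≤ n → (L j < t ∧ t < U j ∧ F t = 0) := by
      intro j
      by_cases hj : j ≤ n
      · obtain ⟨t, ht⟩ := hroot j hj
        exact ⟨t, fun _ => ht⟩
      · exact ⟨0, fun hc => absurd hc hj⟩
    choose x hx using hch
    have posx : ∀ i, i < n+1 → 0 < x i := by
      intro i hi
      exact lt_of_le_of_lt (hL_nonneg i (by omega)) (hx i (by omega)).1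
    have monox : ∀ i j, i < j → j < n+1 → x i < x j := by
      intro i j hij hj
      have h1 : x i < U i := (hx i (by omega)).2.1
      have h2 : L j < x j := (hx j (by omega)).1
      have h3 : U i < L j := hUL i j hij (by omega)
      linarith
    have spreadx : ∀ i, i+1 < n+1 → x i < β*γ*x (i+1) := by
      intro i hi
      have hin : i < n := by omega
      have h1 : x i < U i := (hx i (by omega)).2.1
      have h2 : L (i+1) < x (i+1) := (hx (i+1) (by omega)).1
      rw [hUdef] at h1
      simp only [if_pos hin] at h1
      rw [hLdef] at h2
      simp only [Nat.add_sub_cancel] at h2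
      rw [if_neg (by omega : ¬ (i+1 = 0))] at h2
      have hyi : 0 < y i := hposy i hin
      have key : γ * y i = β * γ * (y i / β) := by
        field_simp
      have : β * γ * (y i / β) < β * γ * x (i+1) := by
        apply mul_lt_mul_of_pos_left h2 hβγ
      linarith [key ▸ h1]
    -- factorization
    have hisroot : ∀ j, j ≤ n → IsRoot p (-(x j)) := by
      intro j hj
      exact (hx j hj).2.2
    set m : Multiset ℝ := (range (n+1)).val.map (fun j => -(x j)) with hmdef
    have hmnodup : m.Nodup := by
      refine Multiset.Nodup.map_on ?_ (range (n+1)).nodup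
      intro i hi j hj hij
      have hi' : i < n + 1 := by
        rw [← Finset.mem_range]; exact hi
      have hj' : j < n + 1 := by
        rw [← Finset.mem_range]; exact hj
      have hxx : x i = x j := by linarith [neg_inj.1 hij]
      by_contra hne
      rcases Nat.lt_or_ge i j with hl | hg
      · have := monox i j hl hj'; linarith
      · have hl : j < i := by omega
        have := monox j i hl hi'; linarith
    have hmsub : ∀ a ∈ m, a ∈ p.roots := by
      intro a ha
      obtain ⟨j, hj, rfl⟩ := Multiset.mem_map.1 ha
      have hj' : j ≤ n := by
        have : j < n + 1 := by rw [← Finset.mem_range]; exact hj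
        omega
      rw [mem_roots hp0]
      exact hisroot j hj'
    have hle2 : m ≤ p.roots := (Multiset.le_iff_subset hmnodup).2 hmsub
    have hcardm : Multiset.card m = n+1 := by simp [hmdef]
    have hcard2 : Multiset.card p.roots ≤ n+1 := by
      have := p.card_roots'
      omega
    have hre : p.roots = m := (Multiset.eq_of_le_of_card_le hle2 (by omega)).symm
    have hsplit : Splits p :=
      (splits_iff_card_roots).2 (by rw [hre, hcardm, hnd])
    have hfac := Splits.eq_prod_roots hsplit
    rw [hre] at hfac
    refine ⟨x, spreadx, posx, monox, ?_⟩
    show p = _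
    rw [hfac]
    congr 1
    · rw [hpdef, pp_leadingCoeff β γ hβ]
    · rw [hmdef, Multiset.map_map, Finset.prod_eq_multiset_prod]
      congr 1
      apply Multiset.map_congr rfl
      intro j hj
      simp [sub_neg_eq_add]

/-- The strictly decreasing negative real roots of the local polynomial of the
antiferromagnetic two-spin edge model satisfy `r i / r (i+1) < βγ`. -/
theorem stmt8 (β γ : ℝ) (hβ : 0 < β) (hγ : 0 < γ) (h : β * γ < 1)
    (d : ℕ) (hd : 2 ≤ d) (r : Fin d → ℝ)
    (hanti : StrictAnti r) (hneg : ∀ i, r i < 0)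
    (hroot : ∀ i, ∑ k ∈ Finset.range (d + 1),
        (d.choose k : ℝ) * β ^ (k.choose 2) * γ ^ ((d - k).choose 2) * r i ^ k = 0) :
    ∀ i j : Fin d, (j : ℕ) = (i : ℕ) + 1 → r i / r j < β * γ := by
  obtain ⟨x, hspread, hpos, hmono, hfact⟩ := pp_roots β γ hβ hγ h d
  have heval : ∀ i : Fin d, eval (r i) (pp β γ d) = 0 := by
    intro i
    rw [pp_eval]
    exact hroot i
  have hex : ∀ i : Fin d, ∃ j : Fin d, r i = -(x (j : ℕ)) := by
    intro i
    have he := heval i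
    rw [hfact] at he
    simp only [eval_mul, eval_C, eval_prod, eval_add, eval_X] at he
    have hBne : (β ^ (d.choose 2)) ≠ 0 := by positivity
    have hprod : ∏ j ∈ range d, (r i + x j) = 0 := by
      rcases mul_eq_zero.1 he with hc | hc
      · exact absurd hc hBne
      · exact hc
    obtain ⟨j, hjmem, hj0⟩ := Finset.prod_eq_zero_iff.1 hprod
    exact ⟨⟨j, mem_range.1 hjmem⟩, by linarith⟩
  choose σ hσ using hex
  have hσmono : StrictMono σ := by
    intro i i' hii
    have h1 : r i' < r i := hanti hii
    have h2 : x (σ i : ℕ) < x (σ i' : ℕ) := by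
      have := hσ i
      have := hσ i'
      linarith
    by_contra hcon
    push_neg at hcon
    rcases eq_or_lt_of_le hcon with he | hl
    · rw [he] at h2; linarith
    · have := hmono (σ i' : ℕ) (σ i : ℕ) hl (σ i).2
      linarith
  have hσid : σ = id := by
    have hsurj : Function.Surjective σ :=
      Finite.surjective_of_injective hσmono.injective
    have hrange : Set.range σ = Set.range (id : Fin d → Fin d) := by
      rw [Set.range_id, hsurj.range_eq]
    have hwf : WellFoundedLT (Fin d) := inferInstance
    exact (@StrictMono.range_inj (Fin d) (Fin d) _ _ hwf σ id hσmono strictMono_id).1 hrange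
  intro i j hij
  have hri : r i = -(x (i : ℕ)) := by rw [hσ i, hσid]; rfl
  have hrj : r j = -(x (j : ℕ)) := by rw [hσ j, hσid]; rfl
  have hxj : 0 < x (j : ℕ) := hpos _ j.2
  have hxi : 0 < x (i : ℕ) := hpos _ i.2
  rw [hri, hrj, neg_div_neg_eq, div_lt_iff₀ hxj]
  have hjd : (j : ℕ) < d := j.2
  have := hspread (i : ℕ) (by omega)
  rw [hij]
  exact this
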